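/- For all real x ≥ 1, Σ_{n ≤ x} d(n) ≤ x·log(x) + (γ + 1)·x, where d(n) is the number of positive divisors of n and γ is the Euler–Mascheroni constant. -/

import Mathlib

open Real

lemma sum_divisors_eq_sum_div (N : ℕ) :
    ∑ n ∈ Finset.Icc 1 N, n.divisors.card = ∑ d ∈ Finset.Icc 1 N, N / d := by
  have key : ∀ n ∈ Finset.Icc 1 N,
      n.divisors.card = ((Finset.Icc 1 N).filter (· ∣ n)).card := by
    intro n hn
    simp only [Finset.mem_Icc] at hn
    congr 1
    ext d
    simp only [Nat.mem_divisors, Finset.mem_filter, Finset.mem_Icc]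
    constructor
    · rintro ⟨hd, hn0⟩
      exact ⟨⟨Nat.one_le_iff_ne_zero.mpr (fun h => by simp [h] at hd; omega),
        (Nat.le_of_dvd (by omega) hd).trans hn.2⟩, hd⟩
    · rintro ⟨_, hd⟩
      exact ⟨hd, by omega⟩
  rw [Finset.sum_congr rfl key]
  simp_rw [Finset.card_filter]
  rw [Finset.sum_comm]
  refine Finset.sum_congr rfl fun d hd => ?_
  rw [← Finset.card_filter]
  have : Finset.Icc 1 N = Finset.Ioc 0 N := by
    rw [← Finset.Icc_add_one_left_eq_Ioc, zero_add]
  rw [this]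
  simpa using Nat.Ioc_filter_dvd_card_eq_div N d

theorem stmt_11 (x : ℝ) (hx : 1 ≤ x) :
    ∑ n ∈ Finset.Icc 1 ⌊x⌋₊, (n.divisors.card : ℝ) ≤
      x * Real.log x + (Real.eulerMascheroniConstant + 1) * x := by
  have hx0 : (0:ℝ) < x := by linarith
  have hNx : (⌊x⌋₊ : ℝ) ≤ x := Nat.floor_le hx0.le
  have h1 : ∑ n ∈ Finset.Icc 1 ⌊x⌋₊, (n.divisors.card : ℝ)
      = ∑ d ∈ Finset.Icc 1 ⌊x⌋₊, ((⌊x⌋₊ / d : ℕ) : ℝ) := by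
    rw [← Nat.cast_sum, ← Nat.cast_sum, sum_divisors_eq_sum_div]
  rw [h1]
  have h2 : ∑ d ∈ Finset.Icc 1 ⌊x⌋₊, ((⌊x⌋₊ / d : ℕ) : ℝ)
      ≤ ∑ d ∈ Finset.Icc 1 ⌊x⌋₊, x / d := by
    refine Finset.sum_le_sum fun d hd => ?_
    calc ((⌊x⌋₊ / d : ℕ) : ℝ) ≤ (⌊x⌋₊ : ℝ) / d := Nat.cast_div_le
      _ ≤ x / d := by
        have : (0:ℝ) ≤ d := Nat.cast_nonneg d
        gcongr
  have h3 : ∑ d ∈ Finset.Icc 1 ⌊x⌋₊, x / d = x * (harmonic ⌊x⌋₊ : ℝ) := by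
    rw [harmonic_eq_sum_Icc]
    push_cast
    rw [Finset.mul_sum]
    refine Finset.sum_congr rfl fun d hd => ?_
    rw [div_eq_mul_inv]
  have h4 : (harmonic ⌊x⌋₊ : ℝ) ≤ 1 + Real.log x := harmonic_floor_le_one_add_log x hx
  have hγ : (0:ℝ) < Real.eulerMascheroniConstant :=
    lt_trans (by norm_num) one_half_lt_eulerMascheroniConstant
  calc ∑ d ∈ Finset.Icc 1 ⌊x⌋₊, ((⌊x⌋₊ / d : ℕ) : ℝ)
      ≤ x * (harmonic ⌊x⌋₊ : ℝ) := h3 ▸ h2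
    _ ≤ x * (1 + Real.log x) := by nlinarith
    _ ≤ x * Real.log x + (Real.eulerMascheroniConstant + 1) * x := by nlinarith
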